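/- arXiv:2302.00568 — 4 statements merged into one kernel-verified Lean document; each statement's English description precedes it below -/
import Mathlib

section
/- Let F be a field of characteristic different from 2 and 3, let e0, e1, e2 ∈ F be pairwise distinct, and let E be the elliptic curve y² = (x−e0)(x−e1)(x−e2) over F. Let P = (x0, y0) be an affine point on E, and let γ, α, β ∈ F satisfy γ² = x0 − e0, α² = x0 − e1, β² = x0 − e2. Define x11 = x0 + αβ + γ(α+β), x12 = x0 + αβ − γ(α+β), x21 = x0 − αβ + γ(α−β), x22 = x0 − αβ − γ(α−β). Then for each x ∈ {x11, x12, x21, x22} and each y ∈ F with y² = (x−e0)(x−e1)(x−e2) and y ≠ 0, the point Q = (x, y) lies on E and the double 2·Q (in the group of points of E) is an affine point whose x-coordinate equals x0. -/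
open WeierstrassCurve.Affine

private lemma some_congr_aux {F : Type*} [Field F] {W : WeierstrassCurve.Affine F}
    {x x' y : F} (e : x = x') (h : W.Nonsingular x y) (h' : W.Nonsingular x' y) :
    Point.some _ _ h = Point.some _ _ h' := by subst e; rfl

open Classical in
/-- Theorem 1: halving formulae. If `γ² = x0 - e0`, `α² = x0 - e1`, `β² = x0 - e2` for an
affine point `(x0, y0)` on `y² = (x-e0)(x-e1)(x-e2)`, then each of the four listed values of
`x`, together with any nonzero `y` with `y² = (x-e0)(x-e1)(x-e2)`, gives a point `Q` on the
curve whose double is an affine point with `x`-coordinate `x0`. -/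
theorem halving_formulae {F : Type*} [Field F] (h2 : (2 : F) ≠ 0) (h3 : (3 : F) ≠ 0)
    (e0 e1 e2 : F) (h01 : e0 ≠ e1) (h02 : e0 ≠ e2) (h12 : e1 ≠ e2)
    (W : WeierstrassCurve.Affine F)
    (hW : W = ⟨0, -(e0 + e1 + e2), 0, e0 * e1 + e0 * e2 + e1 * e2, -(e0 * e1 * e2)⟩)
    (x0 y0 : F) (hP : W.Equation x0 y0)
    (γ α β : F) (hγ : γ ^ 2 = x0 - e0) (hα : α ^ 2 = x0 - e1) (hβ : β ^ 2 = x0 - e2) :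
    ∀ x ∈ ({x0 + α * β + γ * (α + β), x0 + α * β - γ * (α + β),
            x0 - α * β + γ * (α - β), x0 - α * β - γ * (α - β)} : Set F),
      ∀ y : F, y ^ 2 = (x - e0) * (x - e1) * (x - e2) → y ≠ 0 →
        ∃ (hQ : W.Nonsingular x y) (y' : F) (hP' : W.Nonsingular x0 y'),
          2 • Point.some _ _ hQ = Point.some _ _ hP' := by
  intro x hx y hy hy0
  have ha1 : W.a₁ = 0 := by rw [hW]
  have ha3 : W.a₃ = 0 := by rw [hW]
  have ha2 : W.a₂ = -(e0 + e1 + e2) := by rw [hW]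
  have ha4 : W.a₄ = e0 * e1 + e0 * e2 + e1 * e2 := by rw [hW]
  have ha6 : W.a₆ = -(e0 * e1 * e2) := by rw [hW]
  have h2y : (2 : F) * y ≠ 0 := mul_ne_zero h2 hy0
  have hEq : W.Equation x y := by
    rw [equation_iff, ha1, ha3, ha2, ha4, ha6]
    linear_combination hy
  have hyne : y ≠ W.negY x y := by
    rw [negY, ha1, ha3]
    intro h
    exact h2y (by linear_combination h)
  have hQ : W.Nonsingular x y := by
    rw [nonsingular_iff]
    exact ⟨hEq, Or.inr (by rw [ha1, ha3]; intro h; exact h2y (by linear_combination h))⟩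
  have hL : W.slope x x y y = (3 * x ^ 2 + 2 * -(e0 + e1 + e2) * x
      + (e0 * e1 + e0 * e2 + e1 * e2)) / (2 * y) := by
    rw [slope_of_Y_ne rfl hyne, negY, ha1, ha3, ha2, ha4]
    congr 1 <;> ring
  have hNum : (3 * x ^ 2 + 2 * -(e0 + e1 + e2) * x + (e0 * e1 + e0 * e2 + e1 * e2)) ^ 2
      = (x0 + -(e0 + e1 + e2) + 2 * x) * (2 * y) ^ 2 := by
    have he0 : e0 = x0 - γ ^ 2 := by linear_combination hγ
    have he1 : e1 = x0 - α ^ 2 := by linear_combination hα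
    have he2 : e2 = x0 - β ^ 2 := by linear_combination hβ
    subst he0 he1 he2
    simp only [Set.mem_insert_iff, Set.mem_singleton_iff] at hx
    rcases hx with rfl | rfl | rfl | rfl
    · linear_combination (-4 * (γ ^ 2 + α ^ 2 + β ^ 2 + 2 * (α * β + γ * (α + β)))) * hy
    · linear_combination (-4 * (γ ^ 2 + α ^ 2 + β ^ 2 + 2 * (α * β - γ * (α + β)))) * hy
    · linear_combination (-4 * (γ ^ 2 + α ^ 2 + β ^ 2 + 2 * (-(α * β) + γ * (α - β)))) * hy
    · linear_combination (-4 * (γ ^ 2 + α ^ 2 + β ^ 2 + 2 * (-(α * β) - γ * (α - β)))) * hy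
  have key : W.addX x x (W.slope x x y y) = x0 := by
    rw [addX, hL, ha1, ha2, div_pow, hNum]
    field_simp
    ring
  have hns := nonsingular_add hQ hQ fun h => hyne h.2
  rw [key] at hns
  refine ⟨hQ, _, hns, ?_⟩
  rw [two_smul, Point.add_self_of_Y_ne hyne]
  exact some_congr_aux key _ hns
end

section
/- Let e0, e1, e2 ∈ ℂ be pairwise distinct and let E be the elliptic curve y² = (x−e0)(x−e1)(x−e2) over ℂ. Let P = (x0, y0) be an affine point on E with y0 ≠ 0, and fix γ, α, β ∈ ℂ with γ² = x0 − e0, α² = x0 − e1, β² = x0 − e2. If Q = (x, y) is an affine point on E with 2·Q = P or 2·Q = −P, then x belongs to the set {x0 + αβ + γ(α+β), x0 + αβ − γ(α+β), x0 − αβ + γ(α−β), x0 − αβ − γ(α−β)}. -/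
open WeierstrassCurve.Affine

/-- Completeness part of Theorem 1: over `ℂ`, any affine point `Q = (x, y)` with
`2Q = P` or `2Q = -P` has `x`-coordinate among the four listed values. -/
theorem halving_formulae_complete (e0 e1 e2 : ℂ) (h01 : e0 ≠ e1) (h02 : e0 ≠ e2) (h12 : e1 ≠ e2)
    (W : WeierstrassCurve.Affine ℂ)
    (hW : W = ⟨0, -(e0 + e1 + e2), 0, e0 * e1 + e0 * e2 + e1 * e2, -(e0 * e1 * e2)⟩)
    (x0 y0 : ℂ) (hP : W.Nonsingular x0 y0) (hy0 : y0 ≠ 0)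
    (γ α β : ℂ) (hγ : γ ^ 2 = x0 - e0) (hα : α ^ 2 = x0 - e1) (hβ : β ^ 2 = x0 - e2)
    (x y : ℂ) (hQ : W.Nonsingular x y)
    (h : 2 • Point.some x y hQ = Point.some x0 y0 hP ∨ 2 • Point.some x y hQ = -Point.some x0 y0 hP) :
    x ∈ ({x0 + α * β + γ * (α + β), x0 + α * β - γ * (α + β),
          x0 - α * β + γ * (α - β), x0 - α * β - γ * (α - β)} : Set ℂ) := by
  have ha1 : W.a₁ = 0 := by rw [hW]
  have ha2 : W.a₂ = -(e0 + e1 + e2) := by rw [hW]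
  have ha3 : W.a₃ = 0 := by rw [hW]
  have ha4 : W.a₄ = e0 * e1 + e0 * e2 + e1 * e2 := by rw [hW]
  have ha6 : W.a₆ = -(e0 * e1 * e2) := by rw [hW]
  by_cases hy : y = W.negY x y
  · rw [two_smul, Point.add_self_of_Y_eq hy] at h
    rcases h with h | h
    · exact absurd h.symm (Point.some_ne_zero hP)
    · rw [Point.neg_some] at h
      exact absurd h.symm (Point.some_ne_zero _)
  · rw [two_smul, Point.add_self_of_Y_ne hy] at h
    have hx0 : W.addX x x (W.slope x x y y) = x0 := by
      rcases h with h | h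
      · exact (Point.some.inj h).1
      · rw [Point.neg_some] at h
        exact (Point.some.inj h).1
    have hnegY : W.negY x y = -y := by rw [negY, ha1, ha3]; ring
    have hyne : y ≠ 0 := by
      intro h0
      apply hy
      rw [hnegY, h0, neg_zero]
    set L := W.slope x x y y with hLdef
    have h2y : y - -y ≠ 0 := by
      intro hc
      exact hyne (by linear_combination hc / 2)
    have hL : L * (2 * y) = 3 * x ^ 2 + 2 * W.a₂ * x + W.a₄ := by
      rw [hLdef, slope_of_Y_ne rfl hy, hnegY, ha1]
      rw [div_mul_eq_mul_div, div_eq_iff h2y]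
      ring
    have hx0' : L ^ 2 - W.a₂ - 2 * x = x0 := by
      rw [addX, ha1] at hx0
      linear_combination hx0
    have heq : y ^ 2 = x ^ 3 + W.a₂ * x ^ 2 + W.a₄ * x + W.a₆ := by
      have := (W.equation_iff x y).mp hQ.1
      rw [ha1, ha3] at this
      linear_combination this
    rw [ha2] at *
    rw [ha4] at *
    rw [ha6] at *
    have he0 : e0 = x0 - γ ^ 2 := by linear_combination hγ
    have he1 : e1 = x0 - α ^ 2 := by linear_combination hα
    have he2 : e2 = x0 - β ^ 2 := by linear_combination hβ
    subst he0 he1 he2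
    have key : (x - (x0 + α * β + γ * (α + β))) * (x - (x0 + α * β - γ * (α + β)))
        * ((x - (x0 - α * β + γ * (α - β))) * (x - (x0 - α * β - γ * (α - β)))) = 0 := by
      have hN : (3 * x ^ 2 + 2 * -((x0 - γ^2) + (x0 - α^2) + (x0 - β^2)) * x +
          ((x0 - γ^2) * (x0 - α^2) + (x0 - γ^2) * (x0 - β^2) + (x0 - α^2) * (x0 - β^2))) ^ 2
          = (x0 + -((x0 - γ^2) + (x0 - α^2) + (x0 - β^2)) + 2 * x) * (2 * y) ^ 2 := by
        linear_combination (-(3 * x ^ 2 + 2 * -((x0 - γ^2) + (x0 - α^2) + (x0 - β^2)) * x +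
          ((x0 - γ^2) * (x0 - α^2) + (x0 - γ^2) * (x0 - β^2) + (x0 - α^2) * (x0 - β^2)))
          - L * (2 * y)) * hL + (2 * y) ^ 2 * hx0'
      linear_combination hN + (4 * (x0 + -((x0 - γ^2) + (x0 - α^2) + (x0 - β^2)) + 2 * x)) * heq
    simp only [Set.mem_insert_iff, Set.mem_singleton_iff]
    rcases mul_eq_zero.mp key with h1 | h1
    · rcases mul_eq_zero.mp h1 with h2 | h2
      · exact Or.inl (sub_eq_zero.mp h2)
      · exact Or.inr (Or.inl (sub_eq_zero.mp h2))
    · rcases mul_eq_zero.mp h1 with h2 | h2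
      · exact Or.inr (Or.inr (Or.inl (sub_eq_zero.mp h2)))
      · exact Or.inr (Or.inr (Or.inr (sub_eq_zero.mp h2)))
end

section
/- Let e0, e1, e2 ∈ ℚ be pairwise distinct, let E be the elliptic curve y² = (x−e0)(x−e1)(x−e2) over ℚ, and let P = (x0, y0) be a rational affine point on E. Then there exists a rational point Q on E with 2·Q = P if and only if x0 − e0, x0 − e1, and x0 − e2 are all squares of rational numbers. -/
open WeierstrassCurve.Affine

private lemma point_some_congr {F : Type*} [Field F] {W : WeierstrassCurve.Affine F}
    {x1 y1 x2 y2 : F} (h1 : W.Nonsingular x1 y1) (h2 : W.Nonsingular x2 y2)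
    (hx : x1 = x2) (hy : y1 = y2) : Point.some _ _ h1 = Point.some _ _ h2 := by
  subst hx; subst hy; rfl

private lemma point_some_inj {F : Type*} [Field F] {W : WeierstrassCurve.Affine F}
    {x1 y1 x2 y2 : F} {h1 : W.Nonsingular x1 y1} {h2 : W.Nonsingular x2 y2}
    (h : Point.some _ _ h1 = Point.some _ _ h2) : x1 = x2 ∧ y1 = y2 := by
  injection h with hx hy
  exact ⟨hx, hy⟩

private lemma half_exists (e0 e1 e2 x0 y0 a b c : ℚ)
    (h01 : e0 ≠ e1) (h02 : e0 ≠ e2) (h12 : e1 ≠ e2)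
    (W : WeierstrassCurve.Affine ℚ)
    (hW : W = ⟨0, -(e0 + e1 + e2), 0, e0 * e1 + e0 * e2 + e1 * e2, -(e0 * e1 * e2)⟩)
    (ha : a ^ 2 = x0 - e0) (hb : b ^ 2 = x0 - e1) (hc : c ^ 2 = x0 - e2)
    (habc : a * b * c = y0)
    (hP : W.Nonsingular x0 y0) :
    ∃ Q : W.Point, 2 • Q = Point.some _ _ hP := by
  have he0 : e0 = x0 - a ^ 2 := by linarith
  have he1 : e1 = x0 - b ^ 2 := by linarith
  have he2 : e2 = x0 - c ^ 2 := by linarith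
  have hy0 : y0 = a * b * c := habc.symm
  subst he0 he1 he2 hy0
  have ha1 : W.a₁ = 0 := by rw [hW]
  have ha2 : W.a₂ = -((x0 - a ^ 2) + (x0 - b ^ 2) + (x0 - c ^ 2)) := by rw [hW]
  have ha3 : W.a₃ = 0 := by rw [hW]
  have ha4 : W.a₄ = (x0 - a ^ 2) * (x0 - b ^ 2) + (x0 - a ^ 2) * (x0 - c ^ 2)
      + (x0 - b ^ 2) * (x0 - c ^ 2) := by rw [hW]
  have ha6 : W.a₆ = -((x0 - a ^ 2) * (x0 - b ^ 2) * (x0 - c ^ 2)) := by rw [hW]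
  have hab2 : a ^ 2 ≠ b ^ 2 := fun h => h01 (by rw [h])
  have hac2 : a ^ 2 ≠ c ^ 2 := fun h => h02 (by rw [h])
  have hbc2 : b ^ 2 ≠ c ^ 2 := fun h => h12 (by rw [h])
  have habne : a + b ≠ 0 := by
    intro h; apply hab2; have hba : a = -b := by linarith
    rw [hba]; ring
  have hacne : a + c ≠ 0 := by
    intro h; apply hac2; have hba : a = -c := by linarith
    rw [hba]; ring
  have hbcne : b + c ≠ 0 := by
    intro h; apply hbc2; have hba : b = -c := by linarith
    rw [hba]; ring
  have hYne : (a + b) * (a + c) * (b + c) ≠ 0 :=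
    mul_ne_zero (mul_ne_zero habne hacne) hbcne
  have hEq : W.Equation (x0 + a * b + a * c + b * c) ((a + b) * (a + c) * (b + c)) := by
    rw [equation_iff, ha1, ha2, ha3, ha4, ha6]; ring
  have hΔ : W.Δ ≠ 0 := by
    have hD : W.Δ = 16 * ((a ^ 2 - b ^ 2) * (a ^ 2 - c ^ 2) * (b ^ 2 - c ^ 2)) ^ 2 := by
      rw [WeierstrassCurve.Δ, WeierstrassCurve.b₂, WeierstrassCurve.b₄, WeierstrassCurve.b₆,
        WeierstrassCurve.b₈, ha1, ha2, ha3, ha4, ha6]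
      ring
    rw [hD]
    exact mul_ne_zero (by norm_num) (pow_ne_zero _ (mul_ne_zero
      (mul_ne_zero (sub_ne_zero.mpr hab2) (sub_ne_zero.mpr hac2)) (sub_ne_zero.mpr hbc2)))
  have hQ : W.Nonsingular (x0 + a * b + a * c + b * c) ((a + b) * (a + c) * (b + c)) :=
    (equation_iff_nonsingular_of_Δ_ne_zero (W := W) hΔ).mp hEq
  have hYne' : (a + b) * (a + c) * (b + c) ≠
      W.negY (x0 + a * b + a * c + b * c) ((a + b) * (a + c) * (b + c)) := by
    rw [negY, ha1, ha3]
    intro hh; apply hYne; linarith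
  refine ⟨Point.some _ _ hQ, ?_⟩
  rw [two_nsmul, Point.add_self_of_Y_ne hYne']
  have hL : W.slope (x0 + a * b + a * c + b * c) (x0 + a * b + a * c + b * c)
      ((a + b) * (a + c) * (b + c)) ((a + b) * (a + c) * (b + c)) =
      (3 * (x0 + a * b + a * c + b * c) ^ 2
        + 2 * (-((x0 - a ^ 2) + (x0 - b ^ 2) + (x0 - c ^ 2))) * (x0 + a * b + a * c + b * c)
        + ((x0 - a ^ 2) * (x0 - b ^ 2) + (x0 - a ^ 2) * (x0 - c ^ 2)
          + (x0 - b ^ 2) * (x0 - c ^ 2)))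
      / (2 * ((a + b) * (a + c) * (b + c))) := by
    rw [slope_of_Y_ne rfl hYne', ha1, ha2, ha4, negY, ha1, ha3]
    ring_nf
  refine point_some_congr _ _ ?_ ?_
  · simp only [addX]
    rw [hL, ha1, ha2]
    field_simp
    ring
  · simp only [addY, negAddY, addX, negY]
    rw [ha1, ha2, ha3, hL]
    field_simp
    ring

/-- Corollary 2: a rational affine point `P = (x0, y0)` on `y² = (x-e0)(x-e1)(x-e2)` is
twice a rational point if and only if `x0 - e0`, `x0 - e1`, `x0 - e2` are all rational
squares. -/
theorem halving_rational_iff_squares (e0 e1 e2 : ℚ)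
    (h01 : e0 ≠ e1) (h02 : e0 ≠ e2) (h12 : e1 ≠ e2)
    (W : WeierstrassCurve.Affine ℚ)
    (hW : W = ⟨0, -(e0 + e1 + e2), 0, e0 * e1 + e0 * e2 + e1 * e2, -(e0 * e1 * e2)⟩)
    (x0 y0 : ℚ) (hP : W.Nonsingular x0 y0) :
    (∃ Q : W.Point, 2 • Q = Point.some _ _ hP) ↔
      (∃ a : ℚ, a ^ 2 = x0 - e0) ∧ (∃ b : ℚ, b ^ 2 = x0 - e1) ∧ (∃ c : ℚ, c ^ 2 = x0 - e2) := by
  have ha1 : W.a₁ = 0 := by rw [hW]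
  have ha2 : W.a₂ = -(e0 + e1 + e2) := by rw [hW]
  have ha3 : W.a₃ = 0 := by rw [hW]
  have ha4 : W.a₄ = e0 * e1 + e0 * e2 + e1 * e2 := by rw [hW]
  have ha6 : W.a₆ = -(e0 * e1 * e2) := by rw [hW]
  constructor
  · rintro ⟨Q, hQ⟩
    induction Q with
    | zero =>
      have hQ' : (2 : ℕ) • (0 : W.Point) = Point.some _ _ hP := hQ
      rw [two_nsmul, zero_add] at hQ'
      exact absurd hQ'.symm (Point.some_ne_zero hP)
    | @some x y h =>
      rw [two_nsmul] at hQ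
      by_cases hy : y = W.negY x y
      · rw [Point.add_self_of_Y_eq hy] at hQ
        exact absurd hQ.symm (Point.some_ne_zero hP)
      · rw [Point.add_self_of_Y_ne hy] at hQ
        obtain ⟨hx, -⟩ := point_some_inj hQ
        have hyne : y ≠ 0 := by
          intro h0; apply hy; rw [negY, ha1, ha3, h0]; ring
        have heqn : y ^ 2 = (x - e0) * (x - e1) * (x - e2) := by
          have h' := h.left
          rw [equation_iff, ha1, ha2, ha3, ha4, ha6] at h'
          linear_combination h'
        have hL : W.slope x x y y =
            (3 * x ^ 2 + 2 * (-(e0 + e1 + e2)) * x + (e0 * e1 + e0 * e2 + e1 * e2))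
              / (2 * y) := by
          rw [slope_of_Y_ne rfl hy, ha1, ha2, ha4, negY, ha1, ha3]
          ring_nf
        simp only [addX] at hx
        rw [hL, ha1, ha2] at hx
        refine ⟨⟨((x - e0) ^ 2 - (e1 - e0) * (e2 - e0)) / (2 * y), ?_⟩,
          ⟨((x - e1) ^ 2 - (e0 - e1) * (e2 - e1)) / (2 * y), ?_⟩,
          ⟨((x - e2) ^ 2 - (e0 - e2) * (e1 - e2)) / (2 * y), ?_⟩⟩
        · rw [← hx]
          field_simp
          linear_combination (4 * (2 * x - e1 - e2)) * heqn
        · rw [← hx]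
          field_simp
          linear_combination (4 * (2 * x - e0 - e2)) * heqn
        · rw [← hx]
          field_simp
          linear_combination (4 * (2 * x - e0 - e1)) * heqn
  · rintro ⟨⟨a, ha⟩, ⟨b, hb⟩, ⟨c, hc⟩⟩
    have hsq : (a * b * c) ^ 2 = y0 ^ 2 := by
      have h' := hP.left
      rw [equation_iff, ha1, ha2, ha3, ha4, ha6] at h'
      linear_combination (b ^ 2 * c ^ 2) * ha + ((x0 - e0) * c ^ 2) * hb
        + ((x0 - e0) * (x0 - e1)) * hc - h'
    have hcases : a * b * c = y0 ∨ a * b * c = -y0 := by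
      rcases mul_eq_zero.mp (show (a * b * c - y0) * (a * b * c + y0) = 0 by
        linear_combination hsq) with h' | h'
      · exact Or.inl (by linarith)
      · exact Or.inr (by linarith)
    rcases hcases with h' | h'
    · exact half_exists e0 e1 e2 x0 y0 a b c h01 h02 h12 W hW ha hb hc h' hP
    · exact half_exists e0 e1 e2 x0 y0 (-a) b c h01 h02 h12 W hW
        (by linear_combination ha) hb hc (by linear_combination -h') hP
end

section
/- Let E be the elliptic curve y² = x³ − 36·x over ℚ and let P = (−3, 9), which is a point of E(ℚ). There is no rational point Q ∈ E(ℚ) with 2·Q = P. -/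
open WeierstrassCurve.Affine

/-- Example 1: on `y² = x³ - 36x` over `ℚ`, the point `P = (-3, 9)` lies on the curve but is
not twice a rational point. -/
theorem no_rational_half_of_neg_three_nine :
    let W : WeierstrassCurve.Affine ℚ := ⟨0, 0, 0, -36, 0⟩
    ∃ hP : W.Nonsingular (-3) 9, ∀ Q : W.Point, 2 • Q ≠ Point.some _ _ hP := by
  intro W
  have hP : W.Nonsingular (-3) 9 := by
    rw [nonsingular_iff, equation_iff]
    norm_num [W]
  refine ⟨hP, fun Q hQ => ?_⟩
  rw [two_nsmul] at hQ
  cases Q with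
  | zero =>
    have h0 : (Point.zero : W.Point) = 0 := rfl
    rw [h0, add_zero] at hQ
    exact Point.some_ne_zero hP hQ.symm
  | @some x y h =>
    by_cases hy : y = W.negY x y
    · rw [Point.add_self_of_Y_eq hy] at hQ
      exact Point.some_ne_zero hP hQ.symm
    · rw [Point.add_self_of_Y_ne hy] at hQ
      have hx : W.addX x x (W.slope x x y y) = -3 := by
        injection hQ
      have hyne : y ≠ 0 := by
        intro h0
        apply hy
        simp [negY, h0, W]
      have heq : y ^ 2 = x ^ 3 - 36 * x := by
        have h1 := h.1
        rw [equation_iff] at h1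
        simp only [W] at h1
        linarith
      rw [slope_of_Y_ne rfl hy] at hx
      simp only [addX, negY, W] at hx
      have hd : y + y ≠ 0 := by
        intro h0
        apply hyne
        linarith
      field_simp [hd] at hx
      have key : (x ^ 2 + 36) ^ 2 = -3 * (2 * y) ^ 2 := by
        linear_combination hx + 8 * x * heq
      have hy2 : (0 : ℚ) < (2 * y) ^ 2 := by positivity
      nlinarith [sq_nonneg (x ^ 2 + 36), key, hy2]
end
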